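/- Let $0 < |q| < 1$, $0 < |s| < 1$. For $n \ge 1$, $\tau = (s,\ldots,s)$, and a partition $\lambda$ of length $\le n$, the symmetric interpolation Laurent polynomial is given by $R_\lambda(x;q,\mathbf{s}) = \sum_{\mu \in S_n\lambda} \prod_{i=1}^n R_{\mu_i}(x_i;q,s)$, where $R_m(y;q,s) = \frac{(sy, sy^{-1};q)_m}{(q^m s^2, q^{-m};q)_m}$ and the sum is over the distinct rearrangements $\mu$ of $\lambda$. -/

import Mathlib

noncomputable section
open Finset

/-- The weight `|α| = |α₁| + ⋯ + |αₙ|`. -/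
def wtZ {n : ℕ} (α : Fin n → ℤ) : ℕ := ∑ i, (α i).natAbs

/-- `l ∈ ℤⁿ` is a partition: weakly decreasing and nonnegative. -/
def IsPartition {n : ℕ} (l : Fin n → ℤ) : Prop :=
  (∀ i j : Fin n, i ≤ j → l j ≤ l i) ∧ ∀ i, 0 ≤ l i

/-- The action of `σπ ∈ Wₙ = {±1}ⁿ ⋊ Sₙ` on `ℤⁿ`. -/
def actZ {n : ℕ} (ε : Fin n → Bool) (π : Equiv.Perm (Fin n)) (α : Fin n → ℤ) : Fin n → ℤ :=
  fun j => (if ε j then -1 else 1) * α (π.symm j)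

/-- `Wₙ`-invariance at the level of coefficients. -/
def WInv {n : ℕ} (c : (Fin n → ℤ) →₀ ℂ) : Prop :=
  ∀ (ε : Fin n → Bool) (π : Equiv.Perm (Fin n)) (α : Fin n → ℤ), c (actZ ε π α) = c α

/-- Evaluation of the Laurent polynomial `∑_α c_α x^α`. -/
def evalL {n : ℕ} (c : (Fin n → ℤ) →₀ ℂ) (x : Fin n → ℂ) : ℂ :=
  c.sum fun α a => a * ∏ i, x i ^ α i

/-- The `q`-shifted factorial `(a;q)_k`. -/
def qPoch (q a : ℂ) (k : ℕ) : ℂ := ∏ i ∈ Finset.range k, (1 - q ^ i * a)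

/-- The one-variable interpolation polynomial
`R_m(y) = (sy;q)_m (sy⁻¹;q)_m / ((q^m s²;q)_m (q^{-m};q)_m)`. -/
def Rone (q s : ℂ) (m : ℕ) (y : ℂ) : ℂ :=
  (qPoch q (s * y) m * qPoch q (s * y⁻¹) m) /
    (qPoch q (q ^ m * s ^ 2) m * qPoch q (q ^ (-(m : ℤ))) m)

/-- The `Sₙ`-orbit of `l ∈ ℤⁿ` (the distinct rearrangements of `l`). -/
def orbitS {n : ℕ} (l : Fin n → ℤ) : Finset (Fin n → ℤ) :=
  Finset.image (fun π : Equiv.Perm (Fin n) => fun j => l (π.symm j)) Finset.univ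

/-- denominator of Rone is nonzero -/
lemma Dne {q s : ℂ} (hq0 : q ≠ 0) (hq1 : ‖q‖ < 1)
    (hs1 : ‖s‖ < 1) (m : ℕ) :
    qPoch q (q ^ m * s ^ 2) m * qPoch q (q ^ (-(m : ℤ))) m ≠ 0 := by
  apply mul_ne_zero
  · apply Finset.prod_ne_zero_iff.2
    intro i hi h
    have h2 : q ^ i * (q ^ m * s ^ 2) = 1 := by linear_combination -h
    have habs := congrArg norm h2
    simp only [norm_mul, norm_one, norm_pow] at habs
    simp only [Finset.mem_range] at hi
    have h1q : ‖q‖ ^ i ≤ 1 := pow_le_one₀ (norm_nonneg q) hq1.le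
    have h1q' : ‖q‖ ^ m ≤ 1 := pow_le_one₀ (norm_nonneg q) hq1.le
    have hs2 : ‖s‖ ^ 2 < 1 :=
      pow_lt_one₀ (norm_nonneg s) hs1 (by norm_num)
    have h6 : ‖q‖ ^ i * (‖q‖ ^ m * ‖s‖ ^ 2) ≤
        ‖s‖ ^ 2 := by
      calc ‖q‖ ^ i * (‖q‖ ^ m * ‖s‖ ^ 2)
          ≤ ‖q‖ ^ m * ‖s‖ ^ 2 :=
            mul_le_of_le_one_left (by positivity) h1q
        _ ≤ ‖s‖ ^ 2 := mul_le_of_le_one_left (by positivity) h1q'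
    linarith
  · apply Finset.prod_ne_zero_iff.2
    intro i hi h
    simp only [Finset.mem_range] at hi
    have h2 : q ^ i * q ^ (-(m : ℤ)) = 1 := by linear_combination -h
    have h3 : (q:ℂ) ^ ((i : ℤ) - m) = 1 := by
      rw [sub_eq_add_neg, zpow_add₀ hq0, zpow_natCast]; exact h2
    have h4 : (q:ℂ) ^ ((m : ℤ) - i) = 1 := by
      have : ((m:ℤ) - i) = -((i:ℤ) - m) := by ring
      rw [this, zpow_neg, h3, inv_one]
    have h5 : (q:ℂ) ^ (m - i : ℕ) = 1 := by
      rw [← zpow_natCast]; rw [Nat.cast_sub hi.le]; exact h4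
    have habs := congrArg norm h5
    simp only [norm_pow, norm_one] at habs
    have : ‖q‖ ^ (m - i) < 1 :=
      pow_lt_one₀ (norm_nonneg q) hq1 (by omega)
    rw [habs] at this; exact lt_irrefl _ this

/-- `R_m(q^k s) = 0` for `k < m`. -/
lemma Rone_vanish {q s : ℂ} (hq0 : q ≠ 0) (hs0 : s ≠ 0) {m k : ℕ} (hk : k < m) :
    Rone q s m (q ^ k * s) = 0 := by
  unfold Rone
  rw [div_eq_zero_iff]
  left
  apply mul_eq_zero.2
  right
  unfold qPoch
  apply Finset.prod_eq_zero (Finset.mem_range.2 hk)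
  have h : s * (q ^ k * s)⁻¹ = (q ^ k)⁻¹ := by
    field_simp
  rw [h, mul_inv_cancel₀ (pow_ne_zero _ hq0), sub_self]

/-- `R_m(q^m s) = 1`. -/
lemma Rone_diag {q s : ℂ} (hq0 : q ≠ 0) (hq1 : ‖q‖ < 1)
    (hs0 : s ≠ 0) (hs1 : ‖s‖ < 1) (m : ℕ) :
    Rone q s m (q ^ m * s) = 1 := by
  unfold Rone
  have h1 : s * (q ^ m * s) = q ^ m * s ^ 2 := by ring
  have h2 : s * (q ^ m * s)⁻¹ = q ^ (-(m:ℤ)) := by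
    rw [mul_inv, ← mul_assoc, mul_comm s, mul_assoc, mul_inv_cancel₀ hs0, mul_one,
      zpow_neg, zpow_natCast]
  rw [h1, h2]
  exact div_self (Dne hq0 hq1 hs1 m)

open Polynomial in
/-- numerator polynomial: `y^m (sy;q)_m (s/y;q)_m`. -/
def Pl (q s : ℂ) (m : ℕ) : Polynomial ℂ :=
  (∏ i ∈ range m, (Polynomial.C (-(q^i*s)) * Polynomial.X + Polynomial.C 1)) *
  (∏ i ∈ range m, (Polynomial.X - Polynomial.C (q^i*s)))

/-- Laurent coefficients of `Rone`. -/
def rC (q s : ℂ) (m : ℕ) (j : ℤ) : ℂ :=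
  if -(m:ℤ) ≤ j ∧ j ≤ m then (Pl q s m).coeff (j + m).toNat /
    (qPoch q (q ^ m * s ^ 2) m * qPoch q (q ^ (-(m : ℤ))) m) else 0

lemma rC_bound {q s : ℂ} {m : ℕ} {j : ℤ} (h : rC q s m j ≠ 0) : -(m:ℤ) ≤ j ∧ j ≤ m := by
  by_contra hc
  rw [rC, if_neg hc] at h
  exact h rfl

lemma Pl_eval {q s : ℂ} (m : ℕ) {y : ℂ} (hy : y ≠ 0) :
    Polynomial.eval y (Pl q s m) = qPoch q (s * y) m * (y ^ m * qPoch q (s * y⁻¹) m) := by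
  unfold Pl qPoch
  rw [Polynomial.eval_mul, Polynomial.eval_prod, Polynomial.eval_prod]
  congr 1
  · apply Finset.prod_congr rfl
    intro i _
    simp only [Polynomial.eval_add, Polynomial.eval_mul, Polynomial.eval_C, Polynomial.eval_X,
      Polynomial.eval_one]
    ring
  · have : y ^ m = ∏ _i ∈ range m, y := by simp
    rw [this, ← Finset.prod_mul_distrib]
    apply Finset.prod_congr rfl
    intro i _
    simp only [Polynomial.eval_sub, Polynomial.eval_X, Polynomial.eval_C]
    field_simp

lemma Pl_natDegree_le (q s : ℂ) (m : ℕ) : (Pl q s m).natDegree ≤ 2 * m := by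
  unfold Pl
  apply le_trans (Polynomial.natDegree_mul_le)
  have h1 : (∏ i ∈ range m, (Polynomial.C (-(q^i*s)) * Polynomial.X + Polynomial.C 1)).natDegree ≤ m := by
    apply le_trans (Polynomial.natDegree_prod_le _ _)
    apply le_trans (Finset.sum_le_card_nsmul _ _ 1 _)
    · simp
    intro i _
    exact Polynomial.natDegree_linear_le
  have h2 : (∏ i ∈ range m, (Polynomial.X - Polynomial.C (q^i*s))).natDegree ≤ m := by
    apply le_trans (Polynomial.natDegree_prod_le _ _)
    apply le_trans (Finset.sum_le_card_nsmul _ _ 1 _)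
    · simp
    intro i _
    exact (Polynomial.natDegree_X_sub_C _).le
  omega

lemma Rone_expand {q s : ℂ} (hq0 : q ≠ 0) (hq1 : ‖q‖ < 1)
    (hs1 : ‖s‖ < 1) (m : ℕ) {y : ℂ} (hy : y ≠ 0) :
    Rone q s m y = ∑ j ∈ Finset.Icc (-(m:ℤ)) m, rC q s m j * y ^ j := by
  have hD := Dne hq0 hq1 hs1 m
  have hsum : ∑ j ∈ Finset.Icc (-(m:ℤ)) m, rC q s m j * y ^ j =
      ∑ k ∈ Finset.range (2*m+1), (Pl q s m).coeff k /
        (qPoch q (q ^ m * s ^ 2) m * qPoch q (q ^ (-(m : ℤ))) m) * y ^ ((k:ℤ) - m) := by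
    refine Finset.sum_nbij' (i := fun j : ℤ => (j + (m:ℤ)).toNat)
      (j := fun k : ℕ => (k : ℤ) - m) ?_ ?_ ?_ ?_ ?_
    · intro j hj
      simp only [Finset.mem_Icc] at hj
      simp only [Finset.mem_range]
      omega
    · intro k hk
      simp only [Finset.mem_range] at hk
      simp only [Finset.mem_Icc]
      omega
    · intro j hj
      simp only [Finset.mem_Icc] at hj
      omega
    · intro k hk
      simp only [Finset.mem_range] at hk
      omega
    · intro j hj
      simp only [Finset.mem_Icc] at hj
      rw [rC, if_pos ⟨hj.1, hj.2⟩]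
      congr 2
      omega
  rw [hsum]
  have hstep : ∀ k : ℕ, y ^ ((k:ℤ) - m) = y ^ k * (y ^ m)⁻¹ := by
    intro k
    rw [zpow_sub₀ hy, zpow_natCast, zpow_natCast, div_eq_mul_inv]
  have hev : Polynomial.eval y (Pl q s m) = ∑ k ∈ Finset.range (2*m+1), (Pl q s m).coeff k * y ^ k :=
    Polynomial.eval_eq_sum_range' (by have := Pl_natDegree_le q s m; omega) y
  calc Rone q s m y
      = (∑ k ∈ Finset.range (2*m+1), (Pl q s m).coeff k * y ^ k) * (y ^ m)⁻¹ /
        (qPoch q (q ^ m * s ^ 2) m * qPoch q (q ^ (-(m : ℤ))) m) := by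
        rw [← hev, Pl_eval m hy, Rone]
        have hkey : qPoch q (s*y) m * ((y:ℂ)^m * qPoch q (s*y⁻¹) m) * ((y:ℂ)^m)⁻¹ =
            qPoch q (s*y) m * qPoch q (s*y⁻¹) m := by
          field_simp
        rw [hkey]
    _ = _ := by
        rw [Finset.sum_mul, Finset.sum_div]
        apply Finset.sum_congr rfl
        intro k _
        rw [hstep k]
        ring

lemma laurent_unique {m : ℕ} (a : ℤ → ℂ)
    (h : ∀ y : ℂ, y ≠ 0 → ∑ j ∈ Finset.Icc (-(m:ℤ)) m, a j * y ^ j = 0) :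
    ∀ j ∈ Finset.Icc (-(m:ℤ)) m, a j = 0 := by
  set Q : Polynomial ℂ := ∑ j ∈ Finset.Icc (-(m:ℤ)) m, Polynomial.C (a j) * Polynomial.X ^ (j + m).toNat with hQ
  have hev : ∀ y : ℂ, y ≠ 0 → Polynomial.eval y Q = 0 := by
    intro y hy
    rw [hQ, Polynomial.eval_finset_sum]
    have : ∀ j ∈ Finset.Icc (-(m:ℤ)) m,
        Polynomial.eval y (Polynomial.C (a j) * Polynomial.X ^ (j + m).toNat) =
        (a j * y ^ j) * y ^ m := by
      intro j hj
      simp only [Finset.mem_Icc] at hj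
      simp only [Polynomial.eval_mul, Polynomial.eval_C, Polynomial.eval_pow, Polynomial.eval_X]
      rw [mul_assoc, ← zpow_natCast y ((j+m).toNat), ← zpow_natCast y m, ← zpow_add₀ hy]
      congr 2
      omega
    rw [Finset.sum_congr rfl this, ← Finset.sum_mul, h y hy, zero_mul]
  have hQ0 : Q = 0 := by
    apply Polynomial.eq_zero_of_infinite_isRoot
    apply Set.Infinite.mono (s := {y : ℂ | y ≠ 0})
    · intro y hy
      exact hev y hy
    · exact Set.Finite.infinite_compl (Set.finite_singleton 0)
  intro j hj
  have hcoeff : Q.coeff ((j + m).toNat) = a j := by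
    rw [hQ, Polynomial.finset_sum_coeff]
    rw [Finset.sum_eq_single j]
    · simp
    · intro j' hj' hne
      simp only [Finset.mem_Icc] at hj hj'
      rw [Polynomial.coeff_C_mul, Polynomial.coeff_X_pow, if_neg (by omega), mul_zero]
    · intro hj'
      exact absurd hj hj'
  rw [hQ0] at hcoeff
  simp at hcoeff
  exact hcoeff.symm

lemma rC_symm {q s : ℂ} (hq0 : q ≠ 0) (hq1 : ‖q‖ < 1)
    (hs1 : ‖s‖ < 1) (m : ℕ) (j : ℤ) :
    rC q s m (-j) = rC q s m j := by
  rcases le_or_gt j (m:ℤ) with hj1 | hj1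
  rcases le_or_gt (-(m:ℤ)) j with hj2 | hj2
  · -- j ∈ Icc; use function equality Rone y = Rone y⁻¹
    have key : ∀ y : ℂ, y ≠ 0 →
        ∑ i ∈ Finset.Icc (-(m:ℤ)) m, (rC q s m i - rC q s m (-i)) * y ^ i = 0 := by
      intro y hy
      have h1 : Rone q s m y = Rone q s m y⁻¹ := by
        rw [Rone, Rone, inv_inv, mul_comm (qPoch q (s * y) m)]
      have h2 := Rone_expand hq0 hq1 hs1 m hy
      have h3 := Rone_expand hq0 hq1 hs1 m (inv_ne_zero hy)
      have h4 : ∑ i ∈ Finset.Icc (-(m:ℤ)) m, rC q s m i * (y⁻¹) ^ i =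
          ∑ i ∈ Finset.Icc (-(m:ℤ)) m, rC q s m (-i) * y ^ i := by
        refine Finset.sum_nbij' (i := fun i : ℤ => -i) (j := fun i : ℤ => -i) ?_ ?_ ?_ ?_ ?_ <;>
          simp only [Finset.mem_Icc]
        · intro i hi; omega
        · intro i hi; omega
        · intro i _; omega
        · intro i _; omega
        · intro i hi
          rw [neg_neg, zpow_neg, ← inv_zpow]
      rw [h2, h3, h4] at h1
      rw [Finset.sum_congr rfl (fun i _ => sub_mul (rC q s m i) (rC q s m (-i)) (y ^ i)),
        Finset.sum_sub_distrib, h1, sub_self]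
    have := laurent_unique _ key j (Finset.mem_Icc.2 ⟨hj2, hj1⟩)
    linear_combination -this
  · -- j < -m : both sides 0
    rw [rC, if_neg (by omega), rC, if_neg (by omega)]
  · rw [rC, if_neg (by omega), rC, if_neg (by omega)]

lemma rC_top {q s : ℂ} (hq0 : q ≠ 0) (hq1 : ‖q‖ < 1)
    (hs0 : s ≠ 0) (hs1 : ‖s‖ < 1) (m : ℕ) :
    rC q s m m ≠ 0 := by
  have hD := Dne hq0 hq1 hs1 m
  rw [rC, if_pos (by constructor <;> omega)]
  have htn : ((m:ℤ) + m).toNat = 2*m := by omega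
  rw [htn]
  apply div_ne_zero _ hD
  -- coeff (2m) of Pl is the leading coefficient, a product of nonzero numbers
  have hfac1 : ∀ i ∈ range m, (Polynomial.C (-(q^i*s)) * Polynomial.X + Polynomial.C 1).natDegree = 1 := by
    intro i _
    exact Polynomial.natDegree_linear (by simp [pow_ne_zero, hq0, hs0])
  have hfac2 : ∀ i ∈ range m, (Polynomial.X - Polynomial.C (q^i*s)).natDegree = 1 := fun i _ =>
    Polynomial.natDegree_X_sub_C _
  have hne1 : ∀ i ∈ range m, (Polynomial.C (-(q^i*s)) * Polynomial.X + Polynomial.C 1) ≠ 0 := by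
    intro i hi h
    have := hfac1 i hi
    rw [h] at this
    simp at this
  have hne2 : ∀ i ∈ range m, (Polynomial.X - Polynomial.C (q^i*s)) ≠ 0 :=
    fun i _ => Polynomial.X_sub_C_ne_zero _
  have hd1 : (∏ i ∈ range m, (Polynomial.C (-(q^i*s)) * Polynomial.X + Polynomial.C 1)).natDegree = m := by
    rw [Polynomial.natDegree_prod _ _ hne1, Finset.sum_congr rfl hfac1]
    simp
  have hd2 : (∏ i ∈ range m, (Polynomial.X - Polynomial.C (q^i*s))).natDegree = m := by
    rw [Polynomial.natDegree_prod _ _ hne2, Finset.sum_congr rfl hfac2]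
    simp
  have hPne : Pl q s m ≠ 0 := by
    unfold Pl
    exact mul_ne_zero (Finset.prod_ne_zero_iff.2 hne1) (Finset.prod_ne_zero_iff.2 hne2)
  have hdeg : (Pl q s m).natDegree = 2*m := by
    unfold Pl
    rw [Polynomial.natDegree_mul (Finset.prod_ne_zero_iff.2 hne1) (Finset.prod_ne_zero_iff.2 hne2),
      hd1, hd2]
    omega
  have hlead : (Pl q s m).coeff (2*m) = (Pl q s m).leadingCoeff := by
    rw [Polynomial.leadingCoeff, hdeg]
  rw [hlead]
  unfold Pl
  rw [Polynomial.leadingCoeff_mul, Polynomial.leadingCoeff_prod, Polynomial.leadingCoeff_prod]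
  apply mul_ne_zero
  · apply Finset.prod_ne_zero_iff.2
    intro i _
    rw [Polynomial.leadingCoeff_linear (by simp [pow_ne_zero, hq0, hs0])]
    simp [pow_ne_zero, hq0, hs0]
  · apply Finset.prod_ne_zero_iff.2
    intro i _
    rw [(Polynomial.monic_X_sub_C _).leadingCoeff]
    exact one_ne_zero

-- ===== Part B : combinatorics =====





lemma wtZ_act {n : ℕ} (ε : Fin n → Bool) (π : Equiv.Perm (Fin n)) (α : Fin n → ℤ) :
    wtZ (actZ ε π α) = wtZ α := by
  unfold wtZ actZ
  have h1 : ∀ j, ((if ε j then (-1:ℤ) else 1) * α (π.symm j)).natAbs = (α (π.symm j)).natAbs := by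
    intro j
    rcases Bool.eq_false_or_eq_true (ε j) with h | h <;> simp [h]
  rw [Finset.sum_congr rfl (fun j _ => h1 j)]
  exact Equiv.sum_comp π.symm (fun j => (α j).natAbs)

lemma actZ_actZ {n : ℕ} (ε' ε : Fin n → Bool) (π' π : Equiv.Perm (Fin n)) (α : Fin n → ℤ) :
    ∃ ε'' π'', actZ ε' π' (actZ ε π α) = actZ ε'' π'' α := by
  refine ⟨fun j => xor (ε' j) (ε (π'.symm j)), π.trans π', ?_⟩
  funext j
  unfold actZ
  simp only [Equiv.symm_trans_apply]
  rcases Bool.eq_false_or_eq_true (ε' j) with h | h <;>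
    rcases Bool.eq_false_or_eq_true (ε (π'.symm j)) with h2 | h2 <;>
      simp [h, h2]

/-- sorting map: `sortP α` is the decreasing rearrangement of `|α|`. -/
def sortP {n : ℕ} (α : Fin n → ℤ) : Fin n → ℤ :=
  fun j => |α (Tuple.sort (fun i => (-|α i| : ℤ)) j)|

lemma sortP_isPartition {n : ℕ} (α : Fin n → ℤ) : IsPartition (sortP α) := by
  constructor
  · intro i j hij
    have := Tuple.monotone_sort (fun i => (-|α i| : ℤ)) hij
    simp only [Function.comp_apply] at this
    unfold sortP
    omega
  · intro i
    exact abs_nonneg _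

lemma sortP_act {n : ℕ} (α : Fin n → ℤ) :
    ∃ ε π, sortP α = actZ ε π α := by
  set σ := Tuple.sort (fun i => (-|α i| : ℤ))
  refine ⟨fun j => decide (α (σ j) < 0), σ.symm, ?_⟩
  funext j
  unfold actZ sortP
  simp only [Equiv.symm_symm]
  rcases lt_or_ge (α (σ j)) 0 with h | h
  · simp only [h, decide_eq_true_eq, if_pos]
    rw [abs_of_neg h]
    simp [h]
  · rw [abs_of_nonneg h]
    simp [not_lt.2 h]

lemma partition_unique {n : ℕ} {μ : Fin n → ℤ} (hμ : IsPartition μ)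
    (ε : Fin n → Bool) (π : Equiv.Perm (Fin n)) (hν : IsPartition (actZ ε π μ)) :
    actZ ε π μ = μ := by
  have hstep : actZ ε π μ = fun j => μ (π.symm j) := by
    funext j
    have h1 : 0 ≤ actZ ε π μ j := hν.2 j
    have h2 : 0 ≤ μ (π.symm j) := hμ.2 _
    unfold actZ at h1 ⊢
    rcases Bool.eq_false_or_eq_true (ε j) with h | h <;> simp [h] at h1 ⊢
    omega
  rw [hstep] at hν ⊢
  -- two sorted rearrangements coincide
  have hperm : List.Perm (List.ofFn (fun j => μ (π.symm j))) (List.ofFn μ) :=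
    Equiv.Perm.ofFn_comp_perm π.symm μ
  have hsort : ∀ (f : Fin n → ℤ), (∀ i j : Fin n, i ≤ j → f j ≤ f i) →
      (List.ofFn f).Pairwise (· ≥ ·) := by
    intro f hf
    rw [List.pairwise_ofFn]
    intro i j hij
    exact hf i j hij.le
  have := List.Perm.eq_of_pairwise (fun a b _ _ h1 h2 => le_antisymm h2 h1) (hsort _ hν.1) (hsort _ hμ.1) hperm
  exact List.ofFn_injective this

lemma sortP_spec {n : ℕ} (α : Fin n → ℤ) :
    IsPartition (sortP α) ∧ wtZ (sortP α) = wtZ α :=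
  ⟨sortP_isPartition α, by
    obtain ⟨ε, π, h⟩ := sortP_act α
    rw [h, wtZ_act]⟩

lemma sortP_eq_self {n : ℕ} {μ : Fin n → ℤ} (hμ : IsPartition μ) : sortP μ = μ := by
  obtain ⟨ε, π, h⟩ := sortP_act μ
  rw [h]
  exact partition_unique hμ ε π (h ▸ sortP_isPartition μ)

lemma actZ_inv {n : ℕ} (ε : Fin n → Bool) (π : Equiv.Perm (Fin n)) (α : Fin n → ℤ) :
    actZ (fun j => ε (π j)) π.symm (actZ ε π α) = α := by
  funext j
  unfold actZ
  simp only [Equiv.symm_symm, Equiv.symm_apply_apply]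
  rcases Bool.eq_false_or_eq_true (ε (π j)) with h | h <;> simp [h]

lemma sortP_actZ {n : ℕ} (ε : Fin n → Bool) (π : Equiv.Perm (Fin n)) (α : Fin n → ℤ) :
    sortP (actZ ε π α) = sortP α := by
  obtain ⟨ε1, π1, h1⟩ := sortP_act (actZ ε π α)
  obtain ⟨ε2, π2, h2⟩ := actZ_actZ ε1 ε π1 π α
  obtain ⟨ε3, π3, h3⟩ := sortP_act α
  have hαP2 : actZ (fun j => ε3 (π3 j)) π3.symm (sortP α) = α := by
    rw [h3]; exact actZ_inv ε3 π3 α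
  obtain ⟨ε4, π4, h4⟩ := actZ_actZ ε2 (fun j => ε3 (π3 j)) π2 π3.symm (sortP α)
  have h5 : sortP (actZ ε π α) = actZ ε4 π4 (sortP α) := by
    rw [h1, h2, ← h4, hαP2]
  rw [h5]
  exact partition_unique (sortP_isPartition α) ε4 π4 (h5 ▸ sortP_isPartition (actZ ε π α))

/-- pigeonhole/dominance: if some rearrangement of the partition `μ` is pointwise `≤ ν`,
then `μ ≤ ν` pointwise. -/
lemma dominance {n : ℕ} {μ ν : Fin n → ℤ} (hμ : IsPartition μ) (hν : IsPartition ν)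
    (σ : Equiv.Perm (Fin n)) (h : ∀ i, μ (σ i) ≤ ν i) : ∀ i, μ i ≤ ν i := by
  intro i
  have hex : ∃ j : Fin n, i ≤ j ∧ σ j ≤ i := by
    by_contra hc
    push_neg at hc
    have hsub : (Finset.Iic i).image σ.symm ⊆ Finset.Iio i := by
      intro j hj
      simp only [Finset.mem_image, Finset.mem_Iic] at hj
      obtain ⟨k, hk, rfl⟩ := hj
      simp only [Finset.mem_Iio]
      by_contra hc2
      push_neg at hc2
      have hlt := hc _ hc2
      rw [Equiv.apply_symm_apply] at hlt
      exact absurd hk (not_le.2 hlt)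
    have hcard := Finset.card_le_card hsub
    rw [Finset.card_image_of_injective _ σ.symm.injective, Fin.card_Iic, Fin.card_Iio] at hcard
    omega
  obtain ⟨j, hij, hji⟩ := hex
  calc μ i ≤ μ (σ j) := hμ.1 _ _ hji
    _ ≤ ν j := h j
    _ ≤ ν i := hν.1 _ _ hij

lemma mem_orbitS_self {n : ℕ} (l : Fin n → ℤ) : l ∈ orbitS l := by
  unfold orbitS
  refine Finset.mem_image.2 ⟨1, Finset.mem_univ _, ?_⟩
  rfl

lemma mem_orbitS_iff {n : ℕ} {l κ : Fin n → ℤ} :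
    κ ∈ orbitS l ↔ ∃ σ : Equiv.Perm (Fin n), κ = fun j => l (σ.symm j) := by
  unfold orbitS
  simp only [Finset.mem_image, Finset.mem_univ, true_and]
  constructor
  · rintro ⟨σ, h⟩; exact ⟨σ, h.symm⟩
  · rintro ⟨σ, h⟩; exact ⟨σ, h.symm⟩

lemma orbitS_comp {n : ℕ} {l κ : Fin n → ℤ} (h : κ ∈ orbitS l) (π : Equiv.Perm (Fin n)) :
    (fun j => κ (π j)) ∈ orbitS l := by
  obtain ⟨σ, rfl⟩ := mem_orbitS_iff.1 h
  apply mem_orbitS_iff.2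
  exact ⟨(π.trans σ.symm).symm, by funext j; simp⟩

lemma orbitS_nonneg {n : ℕ} {l κ : Fin n → ℤ} (hl : IsPartition l) (h : κ ∈ orbitS l) (i : Fin n) :
    0 ≤ κ i := by
  obtain ⟨σ, rfl⟩ := mem_orbitS_iff.1 h
  exact hl.2 _

lemma orbitS_wt {n : ℕ} {l κ : Fin n → ℤ} (h : κ ∈ orbitS l) : wtZ κ = wtZ l := by
  obtain ⟨σ, rfl⟩ := mem_orbitS_iff.1 h
  exact Equiv.sum_comp σ.symm (fun j => (l j).natAbs)

lemma orbitS_partition_eq {n : ℕ} {l κ : Fin n → ℤ} (hl : IsPartition l) (hκ : IsPartition κ)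
    (h : κ ∈ orbitS l) : κ = l := by
  obtain ⟨σ, rfl⟩ := mem_orbitS_iff.1 h
  have : (fun j => l (σ.symm j)) = actZ (fun _ => false) σ l := by
    funext j; simp [actZ]
  rw [this] at hκ ⊢
  exact partition_unique hl _ _ hκ

/-- pointwise `≤` plus equal weight forces equality (for nonneg vectors). -/
lemma eq_of_le_of_wt_eq {n : ℕ} {μ ν : Fin n → ℤ} (hμ : ∀ i, 0 ≤ μ i) (hν : ∀ i, 0 ≤ ν i)
    (hle : ∀ i, μ i ≤ ν i) (hwt : wtZ ν ≤ wtZ μ) : μ = ν := by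
  have hcast : ∀ (β : Fin n → ℤ), (∀ i, 0 ≤ β i) → ((wtZ β : ℤ) = ∑ i, β i) := by
    intro β hβ
    unfold wtZ
    rw [Nat.cast_sum]
    exact Finset.sum_congr rfl (fun i _ => Int.natAbs_of_nonneg (hβ i))
  have h1 : ∑ i, ν i ≤ ∑ i, μ i := by
    rw [← hcast μ hμ, ← hcast ν hν]
    exact_mod_cast hwt
  have h2 : ∑ i, (ν i - μ i) = 0 := by
    have : ∑ i, μ i ≤ ∑ i, ν i := Finset.sum_le_sum (fun i _ => hle i)
    have h3 : ∑ i, (ν i - μ i) = (∑ i, ν i) - ∑ i, μ i := by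
      rw [Finset.sum_sub_distrib]
    omega
  have h4 := (Finset.sum_eq_zero_iff_of_nonneg (fun i _ => by
    have := hle i; omega)).1 h2
  funext i
  have := h4 i (Finset.mem_univ i)
  omega

-- ===== Part C : assembly =====



def Ffun (q s : ℂ) {n : ℕ} (lam : Fin n → ℤ) (x : Fin n → ℂ) : ℂ :=
  ∑ κ ∈ orbitS lam, ∏ i, Rone q s (κ i).toNat (x i)

def Cfun (q s : ℂ) {n : ℕ} (lam α : Fin n → ℤ) : ℂ :=
  ∑ κ ∈ orbitS lam, ∏ i, rC q s (κ i).toNat (α i)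

def TT (n d : ℕ) : Finset (Fin n → ℤ) := Fintype.piFinset (fun _ => Finset.Icc (-(d:ℤ)) d)

def Tfil (n d : ℕ) : Finset (Fin n → ℤ) := (TT n d).filter (fun α => wtZ α ≤ d)

open Classical in
def PP (n d : ℕ) : Finset (Fin n → ℤ) := (Tfil n d).filter IsPartition

open Classical in
def Nfun (n d : ℕ) (μ : Fin n → ℤ) (x : Fin n → ℂ) : ℂ :=
  ∑ α ∈ (Tfil n d).filter (fun β => sortP β = μ), ∏ i, x i ^ α i

lemma natAbs_le_wt {n : ℕ} (α : Fin n → ℤ) (i : Fin n) : (α i).natAbs ≤ wtZ α := by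
  unfold wtZ
  exact Finset.single_le_sum (f := fun j => (α j).natAbs) (fun j _ => Nat.zero_le _)
    (Finset.mem_univ i)

lemma part_le_wt {n : ℕ} {lam : Fin n → ℤ} (hl : IsPartition lam) (i : Fin n) :
    lam i ≤ (wtZ lam : ℤ) := by
  have h1 := natAbs_le_wt lam i
  have h2 := Int.natAbs_of_nonneg (hl.2 i)
  omega

open Classical in
lemma mem_PP {n d : ℕ} {α : Fin n → ℤ} : α ∈ PP n d ↔ IsPartition α ∧ wtZ α ≤ d := by
  unfold PP Tfil TT
  simp only [Finset.mem_filter, Fintype.mem_piFinset, Finset.mem_Icc]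
  constructor
  · rintro ⟨⟨_, h2⟩, h3⟩
    exact ⟨h3, h2⟩
  · rintro ⟨h1, h2⟩
    refine ⟨⟨fun i => ?_, h2⟩, h1⟩
    have := natAbs_le_wt α i
    omega

lemma mem_Tfil {n d : ℕ} {α : Fin n → ℤ} : α ∈ Tfil n d ↔ (∀ i, -(d:ℤ) ≤ α i ∧ α i ≤ d) ∧ wtZ α ≤ d := by
  unfold Tfil TT
  simp only [Finset.mem_filter, Fintype.mem_piFinset, Finset.mem_Icc]

/-- mirrored dominance -/
lemma dominance' {n : ℕ} {μ ν : Fin n → ℤ} (hμ : IsPartition μ) (hν : IsPartition ν)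
    (σ : Equiv.Perm (Fin n)) (h : ∀ i, ν i ≤ μ (σ i)) : ∀ i, ν i ≤ μ i := by
  intro i
  have hex : ∃ j : Fin n, j ≤ i ∧ i ≤ σ j := by
    by_contra hc
    push_neg at hc
    have hsub : (Finset.Iic i).image σ ⊆ Finset.Iio i := by
      intro j hj
      simp only [Finset.mem_image, Finset.mem_Iic] at hj
      obtain ⟨k, hk, rfl⟩ := hj
      simp only [Finset.mem_Iio]
      exact hc k hk
    have hcard := Finset.card_le_card hsub
    rw [Finset.card_image_of_injective _ σ.injective, Fin.card_Iic, Fin.card_Iio] at hcard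
    omega
  obtain ⟨j, hji, hij⟩ := hex
  calc ν i ≤ ν j := hν.1 _ _ hji
    _ ≤ μ (σ j) := h j
    _ ≤ μ i := hμ.1 _ _ hij

section Main

variable {n : ℕ} {q s : ℂ} (hq0 : q ≠ 0) (hq1 : ‖q‖ < 1)
    (hs0 : s ≠ 0) (hs1 : ‖s‖ < 1)

include hq0 hq1 hs1 in
/-- expansion of a product of one-variable `Rone`'s over the box `TT n d`. -/
lemma prod_Rone_expand {d : ℕ} {κ : Fin n → ℤ} (hκ0 : ∀ i, 0 ≤ κ i) (hκd : ∀ i, κ i ≤ (d:ℤ))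
    {x : Fin n → ℂ} (hx : ∀ i, x i ≠ 0) :
    ∏ i, Rone q s (κ i).toNat (x i) =
      ∑ α ∈ TT n d, (∏ i, rC q s (κ i).toNat (α i)) * ∏ i, x i ^ α i := by
  have hone : ∀ i : Fin n, Rone q s (κ i).toNat (x i) =
      ∑ j ∈ Finset.Icc (-(d:ℤ)) d, rC q s (κ i).toNat j * x i ^ j := by
    intro i
    rw [Rone_expand hq0 hq1 hs1 _ (hx i)]
    apply Finset.sum_subset
    · intro j hj
      simp only [Finset.mem_Icc] at hj ⊢
      have := hκd i
      have := hκ0 i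
      omega
    · intro j _ hj
      rw [rC, if_neg, zero_mul]
      simp only [Finset.mem_Icc] at hj
      omega
  rw [Finset.prod_congr rfl (fun i _ => hone i), Finset.prod_univ_sum]
  apply Finset.sum_congr rfl
  intro α _
  rw [Finset.prod_mul_distrib]

include hq0 hq1 hs1 in
lemma Ffun_expand {d : ℕ} {lam : Fin n → ℤ} (hlam : lam ∈ PP n d)
    {x : Fin n → ℂ} (hx : ∀ i, x i ≠ 0) :
    Ffun q s lam x = ∑ α ∈ TT n d, Cfun q s lam α * ∏ i, x i ^ α i := by
  obtain ⟨hlp, hld⟩ := mem_PP.1 hlam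
  unfold Ffun Cfun
  have hterm : ∀ κ ∈ orbitS lam, ∏ i, Rone q s (κ i).toNat (x i) =
      ∑ α ∈ TT n d, (∏ i, rC q s (κ i).toNat (α i)) * ∏ i, x i ^ α i := by
    intro κ hκ
    apply prod_Rone_expand hq0 hq1 hs1 (orbitS_nonneg hlp hκ) _ hx
    intro i
    obtain ⟨σ, rfl⟩ := mem_orbitS_iff.1 hκ
    calc lam (σ.symm i) ≤ (wtZ lam : ℤ) := part_le_wt hlp _
      _ ≤ d := by exact_mod_cast hld
  rw [Finset.sum_congr rfl hterm, Finset.sum_comm]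
  apply Finset.sum_congr rfl
  intro α _
  rw [Finset.sum_mul]

include hq0 hq1 hs1 in
lemma Cfun_invariant (lam : Fin n → ℤ) (ε : Fin n → Bool) (π : Equiv.Perm (Fin n))
    (α : Fin n → ℤ) : Cfun q s lam (actZ ε π α) = Cfun q s lam α := by
  unfold Cfun
  have hterm : ∀ κ : Fin n → ℤ, ∏ i, rC q s (κ i).toNat (actZ ε π α i) =
      ∏ i, rC q s (κ (π i)).toNat (α i) := by
    intro κ
    have h1 : ∀ j, rC q s (κ j).toNat (actZ ε π α j) = rC q s (κ j).toNat (α (π.symm j)) := by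
      intro j
      unfold actZ
      rcases Bool.eq_false_or_eq_true (ε j) with h | h
      · rw [h]
        simp only [if_true]
        rw [neg_one_mul, rC_symm hq0 hq1 hs1]
      · rw [h]
        norm_num
    rw [Finset.prod_congr rfl (fun j _ => h1 j)]
    rw [← Equiv.prod_comp π (fun j => rC q s (κ j).toNat (α (π.symm j)))]
    apply Finset.prod_congr rfl
    intro i _
    rw [Equiv.symm_apply_apply]
  rw [Finset.sum_congr rfl (fun κ _ => hterm κ)]
  refine Finset.sum_nbij' (i := fun κ => fun j => κ (π j)) (j := fun κ => fun j => κ (π.symm j))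
    ?_ ?_ ?_ ?_ ?_
  · intro κ hκ
    exact orbitS_comp hκ π
  · intro κ hκ
    exact orbitS_comp hκ π.symm
  · intro κ _
    funext j
    simp
  · intro κ _
    funext j
    simp
  · intro κ _
    rfl

include hq0 hq1 hs1 in
lemma Cfun_sortP (lam α : Fin n → ℤ) : Cfun q s lam α = Cfun q s lam (sortP α) := by
  obtain ⟨ε, π, h⟩ := sortP_act α
  rw [h, Cfun_invariant hq0 hq1 hs1]

lemma Cfun_support {lam α : Fin n → ℤ} (hlp : IsPartition lam)
    (h : Cfun q s lam α ≠ 0) : wtZ α ≤ wtZ lam := by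
  obtain ⟨κ, hκ, hne⟩ : ∃ κ ∈ orbitS lam, ∏ i, rC q s (κ i).toNat (α i) ≠ 0 := by
    by_contra hc
    push_neg at hc
    exact h (Finset.sum_eq_zero hc)
  have hbound : ∀ i, (α i).natAbs ≤ (κ i).natAbs := by
    intro i
    have hfac : rC q s (κ i).toNat (α i) ≠ 0 := by
      intro h0
      exact hne (Finset.prod_eq_zero (Finset.mem_univ i) h0)
    have := rC_bound hfac
    have := orbitS_nonneg hlp hκ i
    omega
  calc wtZ α = ∑ i, (α i).natAbs := rfl
    _ ≤ ∑ i, (κ i).natAbs := Finset.sum_le_sum (fun i _ => hbound i)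
    _ = wtZ lam := orbitS_wt hκ

lemma Cfun_triangular {lam μ : Fin n → ℤ} (hlp : IsPartition lam) (hμp : IsPartition μ)
    (h : Cfun q s lam μ ≠ 0) : ∀ i, μ i ≤ lam i := by
  obtain ⟨κ, hκ, hne⟩ : ∃ κ ∈ orbitS lam, ∏ i, rC q s (κ i).toNat (μ i) ≠ 0 := by
    by_contra hc
    push_neg at hc
    exact h (Finset.sum_eq_zero hc)
  obtain ⟨σ, rfl⟩ := mem_orbitS_iff.1 hκ
  have hbound : ∀ i, μ i ≤ lam (σ.symm i) := by
    intro i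
    have hfac : rC q s (lam (σ.symm i)).toNat (μ i) ≠ 0 := by
      intro h0
      exact hne (Finset.prod_eq_zero (Finset.mem_univ i) h0)
    have := rC_bound hfac
    have := hlp.2 (σ.symm i)
    omega
  exact dominance' hlp hμp σ.symm hbound

include hq0 hq1 hs0 hs1 in
lemma Cfun_diag {lam : Fin n → ℤ} (hlp : IsPartition lam) : Cfun q s lam lam ≠ 0 := by
  unfold Cfun
  rw [Finset.sum_eq_single lam]
  · apply Finset.prod_ne_zero_iff.2
    intro i _
    have h1 : lam i = (((lam i).toNat : ℕ) : ℤ) := by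
      have := hlp.2 i
      omega
    rw [h1]
    exact rC_top hq0 hq1 hs0 hs1 _
  · intro κ hκ hne
    have hb : ∃ i, rC q s (κ i).toNat (lam i) = 0 := by
      by_contra hc
      push_neg at hc
      have hle : ∀ i, lam i ≤ κ i := by
        intro i
        have := rC_bound (hc i)
        have := orbitS_nonneg hlp hκ i
        omega
      have := eq_of_le_of_wt_eq hlp.2 (orbitS_nonneg hlp hκ) hle (le_of_eq (orbitS_wt hκ))
      exact hne this.symm
    obtain ⟨i, hi⟩ := hb
    exact Finset.prod_eq_zero (Finset.mem_univ i) hi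
  · intro h
    exact absurd (mem_orbitS_self lam) h

end Main

section Main2

variable {n : ℕ} {q s : ℂ} (hq0 : q ≠ 0) (hq1 : ‖q‖ < 1)
    (hs0 : s ≠ 0) (hs1 : ‖s‖ < 1)

/-- the interpolation point `ν̄`. -/
def pt (q s : ℂ) {n : ℕ} (ν : Fin n → ℤ) : Fin n → ℂ := fun i => q ^ ν i * s

include hq0 hs0 in
lemma pt_ne_zero (ν : Fin n → ℤ) : ∀ i, pt q s ν i ≠ 0 := by
  intro i
  exact mul_ne_zero (zpow_ne_zero _ hq0) hs0

include hq0 hs0 in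
lemma Rone_vanish' {m : ℕ} {k : ℤ} (hk0 : 0 ≤ k) (hk : k < (m:ℤ)) :
    Rone q s m (q ^ k * s) = 0 := by
  have h1 : (q:ℂ) ^ k = q ^ k.toNat := by
    rw [← zpow_natCast]
    congr 1
    omega
  rw [h1]
  exact Rone_vanish hq0 hs0 (by omega)

include hq0 hq1 hs0 hs1 in
lemma Rone_diag' {m : ℕ} {k : ℤ} (hk : k = (m:ℤ)) :
    Rone q s m (q ^ k * s) = 1 := by
  subst hk
  rw [zpow_natCast]
  exact Rone_diag hq0 hq1 hs0 hs1 m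

include hq0 hs0 in
lemma Ffun_eval_zero {lam ν : Fin n → ℤ} (hlp : IsPartition lam) (hνp : IsPartition ν)
    (h : ∃ i, ν i < lam i) : Ffun q s lam (pt q s ν) = 0 := by
  unfold Ffun
  apply Finset.sum_eq_zero
  intro κ hκ
  have hex : ∃ i, ν i < κ i := by
    by_contra hc
    push_neg at hc
    obtain ⟨σ, rfl⟩ := mem_orbitS_iff.1 hκ
    have := dominance hlp hνp σ.symm (fun i => hc i)
    obtain ⟨i, hi⟩ := h
    exact absurd (this i) (not_le.2 hi)
  obtain ⟨i, hi⟩ := hex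
  apply Finset.prod_eq_zero (Finset.mem_univ i)
  unfold pt
  apply Rone_vanish' hq0 hs0 (hνp.2 i)
  have := orbitS_nonneg hlp hκ i
  omega

include hq0 hq1 hs0 hs1 in
lemma Ffun_eval_diag {ν : Fin n → ℤ} (hνp : IsPartition ν) :
    Ffun q s ν (pt q s ν) = 1 := by
  unfold Ffun
  rw [Finset.sum_eq_single ν]
  · have hone : ∀ i : Fin n, Rone q s (ν i).toNat (pt q s ν i) = 1 := by
      intro i
      unfold pt
      apply Rone_diag' hq0 hq1 hs0 hs1
      have := hνp.2 i
      omega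
    rw [Finset.prod_congr rfl (fun i _ => hone i)]
    simp
  · intro κ hκ hne
    have hex : ∃ i, ν i < κ i := by
      by_contra hc
      push_neg at hc
      have := eq_of_le_of_wt_eq (orbitS_nonneg hνp hκ) hνp.2 hc (le_of_eq (orbitS_wt hκ).symm)
      exact hne this
    obtain ⟨i, hi⟩ := hex
    apply Finset.prod_eq_zero (Finset.mem_univ i)
    unfold pt
    apply Rone_vanish' hq0 hs0 (hνp.2 i)
    have := orbitS_nonneg hνp hκ i
    omega
  · intro h
    exact absurd (mem_orbitS_self ν) h

include hq0 hq1 hs0 hs1 in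
lemma Ffun_eval_delta {lam ν : Fin n → ℤ} (hlp : IsPartition lam) (hνp : IsPartition ν)
    (hwt : wtZ ν ≤ wtZ lam) :
    Ffun q s lam (pt q s ν) = if ν = lam then 1 else 0 := by
  by_cases h : ν = lam
  · subst h
    rw [if_pos rfl]
    exact Ffun_eval_diag hq0 hq1 hs0 hs1 hνp
  · rw [if_neg h]
    apply Ffun_eval_zero hq0 hs0 hlp hνp
    by_contra hc
    push_neg at hc
    exact h (eq_of_le_of_wt_eq hlp.2 hνp.2 hc hwt).symm

open Classical in
/-- regrouping a `W`-compatible sum over the box into orbit sums. -/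
lemma group_sum {d : ℕ} (g : (Fin n → ℤ) → ℂ) (hg1 : ∀ α, g α = g (sortP α))
    (hg2 : ∀ α ∈ TT n d, ¬(wtZ α ≤ d) → g α = 0) (x : Fin n → ℂ) :
    ∑ α ∈ TT n d, g α * ∏ i, x i ^ α i = ∑ μ ∈ PP n d, g μ * Nfun n d μ x := by
  have h1 : ∑ α ∈ TT n d, g α * ∏ i, x i ^ α i = ∑ α ∈ Tfil n d, g α * ∏ i, x i ^ α i := by
    symm
    apply Finset.sum_subset (Finset.filter_subset _ _)
    intro α hα hα2
    rw [hg2 α hα (fun h => hα2 (Finset.mem_filter.2 ⟨hα, h⟩)), zero_mul]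
  rw [h1]
  rw [← Finset.sum_fiberwise_of_maps_to (g := sortP) (t := PP n d) ?hmap]
  case hmap =>
    intro α hα
    rw [mem_PP]
    obtain ⟨hs1', hs2'⟩ := sortP_spec α
    obtain ⟨_, hα2⟩ := Finset.mem_filter.1 hα
    exact ⟨hs1', by omega⟩
  apply Finset.sum_congr rfl
  intro μ _
  unfold Nfun
  rw [Finset.mul_sum]
  apply Finset.sum_congr rfl
  intro α hα
  obtain ⟨-, hα2⟩ := Finset.mem_filter.1 hα
  rw [hg1 α, hα2]

lemma evalL_expand {d : ℕ} (Rc : (Fin n → ℤ) →₀ ℂ) (hdeg : ∀ α ∈ Rc.support, wtZ α ≤ d)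
    (x : Fin n → ℂ) :
    evalL Rc x = ∑ α ∈ TT n d, Rc α * ∏ i, x i ^ α i := by
  unfold evalL
  apply Finsupp.sum_of_support_subset
  · intro α hα
    have h1 := hdeg α hα
    unfold TT
    simp only [Fintype.mem_piFinset, Finset.mem_Icc]
    intro i
    have := natAbs_le_wt α i
    omega
  · intro α _
    rw [zero_mul]

end Main2

/-- For `τ = (s,…,s)` the symmetric interpolation Laurent polynomial `R_l` is
`R_l(x;q,𝐬) = ∑_{μ ∈ Sₙ l} ∏ᵢ R_{μᵢ}(xᵢ;q,s)`. Here `Rc` is characterized by the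
defining properties of `R_l(·;q,𝐬)` (invariance, degree `≤ |l|`, interpolation
at the points `μ̄ᵢ = q^{μᵢ} s`). -/
theorem stmt17 {n : ℕ} (q s : ℂ) (hq0 : 0 < ‖q‖) (hq1 : ‖q‖ < 1)
    (hs0 : 0 < ‖s‖) (hs1 : ‖s‖ < 1)
    (l : Fin n → ℤ) (hl : IsPartition l)
    (Rc : (Fin n → ℤ) →₀ ℂ) (hW : WInv Rc)
    (hdeg : ∀ α ∈ Rc.support, wtZ α ≤ wtZ l)
    (hint : ∀ μ : Fin n → ℤ, IsPartition μ → wtZ μ ≤ wtZ l →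
      evalL Rc (fun i => q ^ μ i * s) = if μ = l then 1 else 0) :
    ∀ x : Fin n → ℂ, (∀ i, x i ≠ 0) →
      evalL Rc x = ∑ μ ∈ orbitS l, ∏ i, Rone q s (μ i).toNat (x i) := by
  have hq0' : q ≠ 0 := by
    intro h; rw [h] at hq0; simp at hq0
  have hs0' : s ≠ 0 := by
    intro h; rw [h] at hs0; simp at hs0
  intro x hx
  set d := wtZ l with hd
  have hlP : l ∈ PP n d := mem_PP.2 ⟨hl, le_rfl⟩
  -- function space over nonvanishing points
  let X := {y : Fin n → ℂ // ∀ i, y i ≠ 0}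
  let FX : (Fin n → ℤ) → X → ℂ := fun μ y => Ffun q s μ y.1
  let NX : (Fin n → ℤ) → X → ℂ := fun μ y => Nfun n d μ y.1
  let Sp : Submodule ℂ (X → ℂ) := Submodule.span ℂ (Set.range fun μ : ↥(PP n d) => FX μ.1)
  -- F expansion in terms of the fiber sums N
  have hFX : ∀ μ ∈ PP n d, FX μ = ∑ ν ∈ PP n d, Cfun q s μ ν • NX ν := by
    intro μ hμ
    funext y
    rw [Finset.sum_apply]
    have h1 : FX μ y = ∑ α ∈ TT n d, Cfun q s μ α * ∏ i, y.1 i ^ α i :=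
      Ffun_expand hq0' hq1 hs1 hμ y.2
    rw [h1, group_sum (Cfun q s μ) (fun α => Cfun_sortP hq0' hq1 hs1 μ α)
      (fun α _ hα => by
        by_contra hc
        exact hα (Cfun_support (mem_PP.1 hμ).1 hc |>.trans (mem_PP.1 hμ).2)) y.1]
    apply Finset.sum_congr rfl
    intro ν _
    simp only [Pi.smul_apply, smul_eq_mul]
    rfl
  -- Step A : each N is in the span of the F's
  have stepA : ∀ k : ℕ, ∀ μ, ∀ hμ : μ ∈ PP n d, wtZ μ ≤ k → NX μ ∈ Sp := by
    intro k
    induction k using Nat.strong_induction_on with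
    | _ k IH =>
      intro μ hμ hwt
      have hμp := (mem_PP.1 hμ).1
      have hCne : Cfun q s μ μ ≠ 0 := Cfun_diag hq0' hq1 hs0' hs1 hμp
      have hsplit : FX μ = Cfun q s μ μ • NX μ + ∑ ν ∈ (PP n d).erase μ, Cfun q s μ ν • NX ν := by
        rw [hFX μ hμ]
        exact (Finset.add_sum_erase _ _ hμ).symm
      have hNX : NX μ = (Cfun q s μ μ)⁻¹ •
          (FX μ - ∑ ν ∈ (PP n d).erase μ, Cfun q s μ ν • NX ν) := by
        rw [hsplit]
        rw [add_sub_cancel_right, inv_smul_smul₀ hCne]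
      rw [hNX]
      apply Submodule.smul_mem
      apply Submodule.sub_mem
      · exact Submodule.subset_span ⟨⟨μ, hμ⟩, rfl⟩
      · apply Submodule.sum_mem
        intro ν hν
        obtain ⟨hνne, hνP⟩ := Finset.mem_erase.1 hν
        by_cases hC : Cfun q s μ ν = 0
        · rw [hC, zero_smul]
          exact Submodule.zero_mem _
        · apply Submodule.smul_mem
          have hνp := (mem_PP.1 hνP).1
          have hle := Cfun_triangular hμp hνp hC
          have hlt : wtZ ν < wtZ μ := by
            have h1 : wtZ ν ≤ wtZ μ := by
              unfold wtZ
              apply Finset.sum_le_sum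
              intro i _
              have := hνp.2 i
              have := hle i
              omega
            rcases lt_or_eq_of_le h1 with h | h
            · exact h
            · exact absurd (eq_of_le_of_wt_eq hνp.2 hμp.2 hle (le_of_eq h.symm)) hνne
          exact IH (wtZ ν) (by omega) ν hνP le_rfl
  -- expansion of evalL Rc
  have hRc : (fun y : X => evalL Rc y.1) = ∑ μ ∈ PP n d, Rc μ • NX μ := by
    funext y
    rw [Finset.sum_apply, evalL_expand Rc hdeg y.1]
    rw [group_sum (⇑Rc) (fun α => by
        obtain ⟨ε, π, h⟩ := sortP_act α
        rw [h, hW ε π α])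
      (fun α _ hα => by
        by_contra hc
        exact hα (hdeg α (Finsupp.mem_support_iff.2 hc))) y.1]
    apply Finset.sum_congr rfl
    intro ν _
    simp only [Pi.smul_apply, smul_eq_mul]
    rfl
  -- the difference
  let H : X → ℂ := fun y => evalL Rc y.1 - Ffun q s l y.1
  have hH : H = ∑ μ ∈ PP n d, (Rc μ - Cfun q s l μ) • NX μ := by
    funext y
    have h1 : H y = evalL Rc y.1 - FX l y := rfl
    rw [h1, congrFun hRc y, congrFun (hFX l hlP) y, Finset.sum_apply, Finset.sum_apply,
      Finset.sum_apply, ← Finset.sum_sub_distrib]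
    apply Finset.sum_congr rfl
    intro ν _
    simp only [Pi.smul_apply, smul_eq_mul]
    ring
  have hHmem : H ∈ Sp := by
    rw [hH]
    apply Submodule.sum_mem
    intro μ hμ
    exact Submodule.smul_mem _ _ (stepA (wtZ μ) μ hμ le_rfl)
  obtain ⟨w, hw⟩ := (Submodule.mem_span_range_iff_exists_fun ℂ).1 hHmem
  -- vanishing of H at the interpolation points
  have hHzero : ∀ ν ∈ PP n d, H ⟨pt q s ν, pt_ne_zero hq0' hs0' ν⟩ = 0 := by
    intro ν hν
    obtain ⟨hνp, hνd⟩ := mem_PP.1 hν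
    have h1 : evalL Rc (pt q s ν) = if ν = l then 1 else 0 := hint ν hνp hνd
    have h2 : Ffun q s l (pt q s ν) = if ν = l then 1 else 0 :=
      Ffun_eval_delta hq0' hq1 hs0' hs1 hl hνp hνd
    show evalL Rc (pt q s ν) - Ffun q s l (pt q s ν) = 0
    rw [h1, h2, sub_self]
  -- Step B : all coefficients w vanish
  have stepB : ∀ k : ℕ, ∀ μ : ↥(PP n d), wtZ μ.1 ≤ k → w μ = 0 := by
    intro k
    induction k using Nat.strong_induction_on with
    | _ k IH =>
      rintro ⟨ν, hν⟩ hwt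
      have hwt' : wtZ ν ≤ k := hwt
      obtain ⟨hνp, hνd⟩ := mem_PP.1 hν
      have hy := congrFun hw ⟨pt q s ν, pt_ne_zero hq0' hs0' ν⟩
      rw [Finset.sum_apply, hHzero ν hν] at hy
      rw [Finset.sum_eq_single (⟨ν, hν⟩ : ↥(PP n d))] at hy
      · simp only [Pi.smul_apply, smul_eq_mul] at hy
        have hdiag : FX ν ⟨pt q s ν, pt_ne_zero hq0' hs0' ν⟩ = 1 :=
          Ffun_eval_diag hq0' hq1 hs0' hs1 hνp
        rw [hdiag, mul_one] at hy
        exact hy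
      · rintro ⟨μ, hμ⟩ _ hne
        obtain ⟨hμp, hμd⟩ := mem_PP.1 hμ
        simp only [Pi.smul_apply, smul_eq_mul]
        by_cases hcase : ∃ i, ν i < μ i
        · have : FX μ ⟨pt q s ν, pt_ne_zero hq0' hs0' ν⟩ = 0 :=
            Ffun_eval_zero hq0' hs0' hμp hνp hcase
          rw [this, mul_zero]
        · push_neg at hcase
          have hμν : μ ≠ ν := by
            intro h
            exact hne (by simp [h])
          have hlt : wtZ μ < wtZ ν := by
            have h1 : wtZ μ ≤ wtZ ν := by
              unfold wtZ
              apply Finset.sum_le_sum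
              intro i _
              have := hμp.2 i
              have := hcase i
              omega
            rcases lt_or_eq_of_le h1 with h | h
            · exact h
            · exact absurd (eq_of_le_of_wt_eq hμp.2 hνp.2 hcase (le_of_eq h.symm)) hμν
          rw [IH (wtZ μ) (by omega) ⟨μ, hμ⟩ le_rfl, zero_mul]
      · intro h
        exact absurd (Finset.mem_univ _) h
  have hwzero : ∀ μ : ↥(PP n d), w μ = 0 := fun μ => stepB (wtZ μ.1) μ le_rfl
  have hH0 : H = 0 := by
    rw [← hw]
    apply Finset.sum_eq_zero
    intro μ _
    rw [hwzero μ, zero_smul]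
  have := congrFun hH0 ⟨x, hx⟩
  have hfin : evalL Rc x - Ffun q s l x = 0 := this
  have h2 : evalL Rc x = Ffun q s l x := sub_eq_zero.1 hfin
  rw [h2]
  rfl
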